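/- Let $h : \mathfrak{g} \to \mathbb{R}$ be a smooth $\mathrm{Ad}$-invariant function on the Lie algebra of a compact Lie group $G$ with $\mathrm{Ad}$-invariant inner product, with gradient $u_h$ and Hessian $H_h(y)$ (a self-adjoint endomorphism of $\mathfrak{g}$). Then $\mathrm{ad}_{u_h(y)} = \mathrm{ad}_y \circ H_h(y) = H_h(y) \circ \mathrm{ad}_y$ for every $y \in \mathfrak{g}$. -/

import Mathlib

open scoped RealInnerProductSpace

/-- For a smooth `Ad`-invariant function `h` on `𝔤` (bracket `l`) with gradient
`u` and Hessian `H_h(y) = d(u)_y`, one has `ad_{u(y)} = ad_y ∘ H_h(y) = H_h(y) ∘ ad_y`.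
`Ad`-invariance is encoded infinitesimally via `dh_y([A,y]) = 0`. -/
theorem ad_grad_eq_ad_comp_hessian
    {g : Type*} [NormedAddCommGroup g] [InnerProductSpace ℝ g] [FiniteDimensional ℝ g]
    (l : g →ₗ[ℝ] g →ₗ[ℝ] g)
    (hlalt : ∀ X : g, l X X = 0)
    (hljac : ∀ X Y Z : g, l X (l Y Z) = l (l X Y) Z + l Y (l X Z))
    (hinv : ∀ X Y Z : g, ⟪l X Y, Z⟫ + ⟪Y, l X Z⟫ = 0)
    (h : g → ℝ) (hh : ContDiff ℝ 2 h)
    (hadh : ∀ (y A : g), fderiv ℝ h y (l A y) = 0)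
    (u : g → g) (hudiff : Differentiable ℝ u)
    (hu : ∀ (y A : g), ⟪u y, A⟫ = fderiv ℝ h y A)
    (y : g) :
    ∀ V : g,
      l (u y) V = l y (fderiv ℝ u y V) ∧ l (u y) V = fderiv ℝ u y (l y V) := by
  set H := fderiv ℝ u y with hH
  -- antisymmetry of the bracket
  have hanti : ∀ X Y : g, l X Y = - l Y X := by
    intro X Y
    have h1 := hlalt (X + Y)
    simp only [map_add, LinearMap.add_apply, hlalt X, hlalt Y, zero_add, add_zero] at h1
    rw [add_comm] at h1
    exact eq_neg_of_add_eq_zero_left h1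
  -- skewness of ad
  have hskew : ∀ X Y Z : g, ⟪l X Y, Z⟫ = - ⟪Y, l X Z⟫ := fun X Y Z =>
    eq_neg_of_add_eq_zero_left (hinv X Y Z)
  -- key differentiated identity
  have hkey : ∀ A V : g, ⟪(H : g →L[ℝ] g) V, l A y⟫ + ⟪u y, l A V⟫ = 0 := by
    intro A V
    have hlin : HasFDerivAt (fun z => (l A) z)
        (LinearMap.toContinuousLinearMap (l A)) y :=
      (LinearMap.toContinuousLinearMap (l A)).hasFDerivAt
    have hd := ((hudiff y).hasFDerivAt.inner ℝ hlin)
    have h0 : HasFDerivAt (fun z => ⟪u z, (l A) z⟫) (0 : g →L[ℝ] ℝ) y := by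
      have : (fun z => ⟪u z, (l A) z⟫) = fun _ : g => (0 : ℝ) := by
        funext z
        rw [hu, hadh]
      rw [this]
      exact hasFDerivAt_const 0 y
    have := hd.unique h0
    have h2 := congrFun (congrArg (fun (f : g →L[ℝ] ℝ) => (f : g → ℝ)) this) V
    simp [fderivInnerCLM, real_inner_comm] at h2
    linarith
  -- first identity
  have hgoal1 : ∀ V : g, l (u y) V = l y (H V) := by
    intro V
    apply ext_inner_right ℝ
    intro A
    have hk := hkey A V
    have e1 : ⟪(H : g →L[ℝ] g) V, l A y⟫ = ⟪l y (H V), A⟫ := by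
      rw [hanti A y, inner_neg_right, hskew y (H V) A]
    have e2 : ⟪u y, l A V⟫ = - ⟪l (u y) V, A⟫ := by
      rw [hanti A V, inner_neg_right, hanti (u y) V, inner_neg_left,
        hskew V (u y) A]
      ring
    rw [e1, e2] at hk
    linarith
  -- self-adjointness of the Hessian
  have hsym : ∀ V W : g, ⟪(H : g →L[ℝ] g) V, W⟫ = ⟪V, H W⟫ := by
    -- build the continuous linear map x ↦ ⟪x, ·⟫
    let Φ : g →L[ℝ] (g →L[ℝ] ℝ) := LinearMap.toContinuousLinearMap
      { toFun := fun x => innerSL ℝ x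
        map_add' := fun x z => by ext w; simp [inner_add_left]
        map_smul' := fun c x => by ext w; simp [inner_smul_left] }
    have hΦ : ∀ x w : g, Φ x w = ⟪x, w⟫ := fun x w => rfl
    have hderiv : ∀ z : g, HasFDerivAt h (Φ (u z)) z := by
      intro z
      have hdz : DifferentiableAt ℝ h z := (hh.differentiable (by norm_num)) z
      have : fderiv ℝ h z = Φ (u z) := by
        ext A
        rw [hΦ, hu]
      rw [← this]
      exact hdz.hasFDerivAt
    have hsnd : HasFDerivAt (fun z => Φ (u z)) (Φ.comp H) y :=
      Φ.hasFDerivAt.comp y (hudiff y).hasFDerivAt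
    intro V W
    have := second_derivative_symmetric hderiv hsnd V W
    simp only [ContinuousLinearMap.comp_apply, hΦ] at this
    rw [this, real_inner_comm]
  intro V
  refine ⟨hgoal1 V, ?_⟩
  apply ext_inner_right ℝ
  intro W
  calc ⟪l (u y) V, W⟫ = - ⟪V, l (u y) W⟫ := hskew (u y) V W
    _ = - ⟪V, l y (H W)⟫ := by rw [hgoal1 W]
    _ = ⟪l y V, H W⟫ := by rw [hskew y V (H W)]
    _ = ⟪H (l y V), W⟫ := (hsym (l y V) W).symm
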